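/- Let α be a real number with 0 < α < 1/3. There exist a constant C > 0 and an integer N such that for every integer n ≥ N for which j = αn is an even positive integer, and for every integer w with 0 ≤ w ≤ n, one has K_j(w) ≥ −C · (e·(1+√2)·√((1−α)/α))^{αn}. -/

import Mathlib

set_option maxHeartbeats 1000000

open Polynomial Finset Complex


/-- The binary Krawtchouk polynomial `K_j` with parameter `n`, as a real
function. -/
noncomputable def krawF (n j : ℕ) (x : ℝ) : ℝ :=
  ∑ i ∈ Finset.range (j + 1),
    (-1 : ℝ) ^ i * ((descPochhammer ℝ i).eval x / (i.factorial : ℝ)) *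
      ((descPochhammer ℝ (j - i)).eval ((n : ℝ) - x) / ((j - i).factorial : ℝ))


noncomputable def kpol (n w : ℕ) : Polynomial ℝ :=
  (1 - Polynomial.X) ^ w * (1 + Polynomial.X) ^ (n - w)

lemma coeff_one_sub_X_pow (R : Type*) [CommRing R] (w i : ℕ) :
    ((1 - Polynomial.X : Polynomial R) ^ w).coeff i = (-1) ^ i * (w.choose i : R) := by
  have : (1 - Polynomial.X : Polynomial R) ^ w
      = ∑ k ∈ Finset.range (w + 1), Polynomial.C ((-1 : R) ^ k * (w.choose k : R)) * Polynomial.X ^ k := by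
    rw [sub_eq_add_neg, add_comm, add_pow]
    apply Finset.sum_congr rfl
    intro k hk
    rw [neg_pow, one_pow]
    simp [Polynomial.C_mul, mul_comm, mul_assoc, mul_left_comm]
  rw [this]
  simp only [Polynomial.finset_sum_coeff, Polynomial.coeff_C_mul, Polynomial.coeff_X_pow]
  rw [Finset.sum_eq_single i]
  · by_cases h : i ≤ w
    · simp
    · simp [Nat.choose_eq_zero_of_lt (show w < i by omega)]
  · intro k _ hk
    simp [Ne.symm hk]
  · intro h
    simp only [Finset.mem_range, not_lt] at h
    simp [Nat.choose_eq_zero_of_lt (show w < i by omega)]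

lemma kpol_coeff (n w j : ℕ) :
    (kpol n w).coeff j = ∑ i ∈ Finset.range (j + 1),
      (-1 : ℝ) ^ i * (w.choose i : ℝ) * ((n - w).choose (j - i) : ℝ) := by
  rw [kpol, Polynomial.coeff_mul, Finset.Nat.sum_antidiagonal_eq_sum_range_succ_mk]
  apply Finset.sum_congr rfl
  intro i _
  rw [coeff_one_sub_X_pow, Polynomial.coeff_one_add_X_pow]

lemma desc_div_fact (w i : ℕ) :
    (descPochhammer ℝ i).eval (w : ℝ) / (i.factorial : ℝ) = (w.choose i : ℝ) := by
  rw [descPochhammer_eval_eq_descFactorial, Nat.descFactorial_eq_factorial_mul_choose]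
  push_cast
  rw [mul_comm, mul_div_assoc, div_self (by exact_mod_cast i.factorial_ne_zero), mul_one]

lemma krawF_eq_coeff (n j w : ℕ) (hw : w ≤ n) :
    krawF n j (w : ℝ) = (kpol n w).coeff j := by
  rw [krawF, kpol_coeff]
  apply Finset.sum_congr rfl
  intro i _
  have h1 : ((n : ℝ) - w) = ((n - w : ℕ) : ℝ) := by
    rw [Nat.cast_sub hw]
  rw [desc_div_fact, h1, desc_div_fact]

lemma kpol_symm (n w j : ℕ) (hw : w ≤ n) (hj : Even j) :
    (kpol n (n - w)).coeff j = (kpol n w).coeff j := by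
  rw [kpol_coeff, kpol_coeff]
  have hnw : n - (n - w) = w := by omega
  rw [hnw]
  rw [← Finset.sum_range_reflect]
  apply Finset.sum_congr rfl
  intro i hi
  simp only [Finset.mem_range] at hi
  have h1 : j + 1 - 1 - i = j - i := by omega
  have h2 : j - (j - i) = i := by omega
  rw [h1, h2]
  have h3 : (-1 : ℝ) ^ (j - i) = (-1) ^ i := by
    rcases hj with ⟨m, hm⟩
    have : (-1 : ℝ) ^ (j - i) * (-1) ^ i = (-1) ^ j := by
      rw [← pow_add]; congr 1; omega
    have hj' : (-1 : ℝ) ^ j = 1 := by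
      rw [hm, ← two_mul, pow_mul]; norm_num
    have hi2 : (-1 : ℝ) ^ i * (-1) ^ i = 1 := by
      rw [← pow_add, ← two_mul, pow_mul]; norm_num
    have h4 : (-1 : ℝ) ^ (j - i) * (-1) ^ i * (-1) ^ i = 1 * (-1) ^ i := by
      rw [this, hj']
    rw [mul_assoc, hi2, mul_one, one_mul] at h4
    exact h4
  rw [h3]; ring

lemma mul_derivative_pow (p : Polynomial ℝ) (w : ℕ) :
    p * derivative (p ^ w) = Polynomial.C (w : ℝ) * p ^ w * derivative p := by
  cases w with
  | zero => simp
  | succ m =>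
    rw [derivative_pow_succ]
    push_cast
    ring_nf

lemma kpol_deriv (n w : ℕ) (hw : w ≤ n) :
    (1 - Polynomial.X ^ 2) * derivative (kpol n w)
      = (Polynomial.C ((n : ℝ) - 2 * w) - Polynomial.C (n : ℝ) * Polynomial.X) * kpol n w := by
  have key : (1 - Polynomial.X ^ 2 : Polynomial ℝ) = (1 - Polynomial.X) * (1 + Polynomial.X) := by
    ring
  rw [kpol, derivative_mul, key]
  have h1 : (1 - Polynomial.X : Polynomial ℝ) * derivative ((1 - Polynomial.X) ^ w)
      = Polynomial.C (w : ℝ) * (1 - Polynomial.X) ^ w * (-1) := by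
    rw [mul_derivative_pow]; simp
  have h2 : (1 + Polynomial.X : Polynomial ℝ) * derivative ((1 + Polynomial.X) ^ (n - w))
      = Polynomial.C ((n - w : ℕ) : ℝ) * (1 + Polynomial.X) ^ (n - w) := by
    rw [mul_derivative_pow]; simp
  have hc : ((n - w : ℕ) : ℝ) = (n : ℝ) - w := by
    rw [Nat.cast_sub hw]
  calc (1 - Polynomial.X) * (1 + Polynomial.X) *
        (derivative ((1 - Polynomial.X) ^ w) * (1 + Polynomial.X) ^ (n - w)
          + (1 - Polynomial.X) ^ w * derivative ((1 + Polynomial.X) ^ (n - w)))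
      = ((1 - Polynomial.X) * derivative ((1 - Polynomial.X) ^ w)) * ((1 + Polynomial.X) * (1 + Polynomial.X) ^ (n - w))
        + ((1 - Polynomial.X) * (1 - Polynomial.X) ^ w) * ((1 + Polynomial.X) * derivative ((1 + Polynomial.X) ^ (n - w))) := by
        ring
    _ = (Polynomial.C (w : ℝ) * (1 - Polynomial.X) ^ w * (-1)) * ((1 + Polynomial.X) * (1 + Polynomial.X) ^ (n - w))
        + ((1 - Polynomial.X) * (1 - Polynomial.X) ^ w) * (Polynomial.C ((n - w : ℕ) : ℝ) * (1 + Polynomial.X) ^ (n - w)) := by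
        rw [h1, h2]
    _ = (Polynomial.C ((n : ℝ) - 2 * w) - Polynomial.C (n : ℝ) * Polynomial.X) *
        ((1 - Polynomial.X) ^ w * (1 + Polynomial.X) ^ (n - w)) := by
        rw [hc]
        simp only [map_sub, map_mul, map_natCast, map_ofNat]
        ring

lemma kpol_rec (n w : ℕ) (hw : w ≤ n) (i : ℕ) :
    ((i : ℝ) + 2) * (kpol n w).coeff (i + 2)
      = ((n : ℝ) - 2 * w) * (kpol n w).coeff (i + 1)
        - ((n : ℝ) - i) * (kpol n w).coeff i := by
  set f := kpol n w with hf
  have h := congrArg (fun p => Polynomial.coeff p (i + 1)) (kpol_deriv n w hw)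
  have hL : ((1 - Polynomial.X ^ 2) * derivative f).coeff (i + 1)
      = ((i : ℝ) + 2) * f.coeff (i + 2) - (i : ℝ) * f.coeff i := by
    have e1 : (1 - Polynomial.X ^ 2) * derivative f
        = derivative f - derivative f * Polynomial.X ^ 2 := by ring
    rw [e1, Polynomial.coeff_sub, Polynomial.coeff_derivative,
      Polynomial.coeff_mul_X_pow']
    rcases Nat.eq_zero_or_pos i with hi | hi
    · subst hi; norm_num; ring
    · have h2 : 2 ≤ i + 1 := by omega
      rw [if_pos h2]
      have h3 : i + 1 - 2 = i - 1 := by omega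
      rw [h3, Polynomial.coeff_derivative]
      have h4 : i - 1 + 1 = i := by omega
      rw [h4]
      have h5 : ((i - 1 : ℕ) : ℝ) = (i : ℝ) - 1 := by
        rw [Nat.cast_sub hi]; norm_num
      push_cast [h5]
      ring
  have hR : ((Polynomial.C ((n : ℝ) - 2 * w) - Polynomial.C (n : ℝ) * Polynomial.X) * f).coeff (i + 1)
      = ((n : ℝ) - 2 * w) * f.coeff (i + 1) - (n : ℝ) * f.coeff i := by
    have e2 : (Polynomial.C ((n : ℝ) - 2 * w) - Polynomial.C (n : ℝ) * Polynomial.X) * f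
        = Polynomial.C ((n : ℝ) - 2 * w) * f - Polynomial.C (n : ℝ) * (f * Polynomial.X) := by
      ring
    rw [e2, Polynomial.coeff_sub, Polynomial.coeff_C_mul, Polynomial.coeff_C_mul,
      Polynomial.coeff_mul_X]
  rw [hL, hR] at h
  linarith [h]

lemma kpol_coeff_zero (n w : ℕ) : (kpol n w).coeff 0 = 1 := by
  rw [kpol_coeff]
  simp

lemma kpol_coeff_one (n w : ℕ) (hw : w ≤ n) :
    (kpol n w).coeff 1 = (n : ℝ) - 2 * w := by
  rw [kpol_coeff]
  rw [Finset.sum_range_succ, Finset.sum_range_succ, Finset.sum_range_zero]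
  simp [Nat.choose_one_right]
  rw [Nat.cast_sub hw]
  ring

lemma kpol_pos (n w j : ℕ) (hw2 : 2 * w ≤ n) (hj : 1 ≤ j) (hjn : 3 * (j : ℝ) < n)
    (hs : (4 : ℝ) * j * ((n : ℝ) - j + 2) ≤ ((n : ℝ) - 2 * w) ^ 2) :
    0 ≤ (kpol n w).coeff j := by
  have hw : w ≤ n := by omega
  set a : ℕ → ℝ := fun i => (kpol n w).coeff i with ha
  set s : ℝ := (n : ℝ) - 2 * w with hsdef
  have hs0 : 0 ≤ s := by
    have : (2 * w : ℕ) ≤ (n : ℕ) := hw2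
    have := (Nat.cast_le (α := ℝ)).2 this
    push_cast at this
    simp [hsdef]; linarith
  have hj1 : (1 : ℝ) ≤ (j : ℝ) := by exact_mod_cast hj
  have hspos : 0 < s := by
    rcases lt_or_eq_of_le hs0 with h | h
    · exact h
    · exfalso
      rw [← h] at hs
      nlinarith [hs]
  have key : ∀ i, i ≤ j → 0 ≤ a i ∧ (i < j → s * a i ≤ 2 * ((i : ℝ) + 1) * a (i + 1)) := by
    intro i
    induction i with
    | zero =>
      intro _
      constructor
      · simp [ha, kpol_coeff_zero]
      · intro _
        have h0 : a 0 = 1 := kpol_coeff_zero n w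
        have h1 : a 1 = s := kpol_coeff_one n w hw
        rw [h0, h1]
        push_cast
        linarith
    | succ m ih =>
      intro hmj
      obtain ⟨h0, h1⟩ := ih (by omega)
      have hstep := h1 (by omega)
      have hm1pos : (0 : ℝ) < 2 * ((m : ℝ) + 1) := by positivity
      have ha1 : 0 ≤ a (m + 1) := by
        nlinarith [mul_nonneg hs0 h0]
      refine ⟨ha1, ?_⟩
      intro hlt
      -- need s * a (m+1) ≤ 2 * (m+2) * a (m+2)
      have hrec := kpol_rec n w hw m
      -- s^2 ≥ 4 (m+1) (n - m)
      have hineq : 4 * ((m : ℝ) + 1) * ((n : ℝ) - m) ≤ s ^ 2 := by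
        have hk : (m : ℝ) + 1 ≤ (j : ℝ) - 1 := by
          have : (m : ℕ) + 2 ≤ j := by omega
          have := (Nat.cast_le (α := ℝ)).2 this
          push_cast at this
          linarith
        have hprod : 0 ≤ ((j : ℝ) - ((m : ℝ) + 1)) * ((n : ℝ) - (j : ℝ) - ((m : ℝ) + 1)) := by
          apply mul_nonneg <;> linarith
        nlinarith [hs, hprod]
      have hkey : 2 * ((n : ℝ) - m) * a m ≤ s * a (m + 1) := by
        have e1 : s * (s * a m) ≤ s * (2 * ((m : ℝ) + 1) * a (m + 1)) :=
          mul_le_mul_of_nonneg_left hstep hs0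
        nlinarith [mul_nonneg h0 (le_of_lt hspos), e1, hineq, h0]
      have hrec' : ((m : ℝ) + 2) * a (m + 2) = s * a (m + 1) - ((n : ℝ) - m) * a m := hrec
      push_cast
      linarith [hrec', hkey]
  exact (key j le_rfl).1

lemma dft_coeff (m : ℕ) (hm : 0 < m) (p : Polynomial ℂ) (hdeg : p.natDegree < m)
    (j : ℕ) (hj : j < m) (r : ℝ) :
    (m : ℂ) * (p.coeff j * (r : ℂ) ^ j)
      = ∑ k ∈ Finset.range m,
          p.eval ((r : ℂ) * Complex.exp (2 * Real.pi * Complex.I / m) ^ k)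
            * Complex.exp (2 * Real.pi * Complex.I / m) ^ (k * (m - j)) := by
  set ζ : ℂ := Complex.exp (2 * Real.pi * Complex.I / m) with hζ
  have hprim : IsPrimitiveRoot ζ m := Complex.isPrimitiveRoot_exp m (by omega)
  have hζm : ζ ^ m = 1 := hprim.pow_eq_one
  have hev : ∀ k : ℕ, p.eval ((r : ℂ) * ζ ^ k) * ζ ^ (k * (m - j))
      = ∑ i ∈ Finset.range m, p.coeff i * ((r : ℂ) ^ i * (ζ ^ (i + (m - j))) ^ k) := by
    intro k
    rw [Polynomial.eval_eq_sum_range' hdeg, Finset.sum_mul]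
    apply Finset.sum_congr rfl
    intro i _
    have hz1 : (ζ ^ (i + (m - j))) ^ k = ζ ^ (k * i) * ζ ^ (k * (m - j)) := by
      rw [← pow_mul, ← pow_add]
      congr 1
      ring
    rw [hz1, mul_pow, ← pow_mul]
    ring
  have hinner : ∀ i ∈ Finset.range m,
      (∑ k ∈ Finset.range m, (ζ ^ (i + (m - j))) ^ k) = if i = j then (m : ℂ) else 0 := by
    intro i hi
    simp only [Finset.mem_range] at hi
    by_cases hij : i = j
    · subst hij
      rw [show i + (m - i) = m by omega, hζm]
      simp
    · rw [if_neg hij]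
      have hne1 : ζ ^ (i + (m - j)) ≠ 1 := by
        intro h1
        rw [hprim.pow_eq_one_iff_dvd] at h1
        rcases h1 with ⟨c, hc⟩
        have hcases : c = 0 ∨ c = 1 ∨ 2 ≤ c := by omega
        rcases hcases with h | h | h
        · subst h; simp at hc; omega
        · subst h; simp at hc; omega
        · have h2 : m * 2 ≤ m * c := Nat.mul_le_mul_left m h
          omega
      rw [geom_sum_eq hne1]
      have hz : (ζ ^ (i + (m - j))) ^ m = 1 := by
        rw [← pow_mul, mul_comm, pow_mul, hζm, one_pow]
      rw [hz]
      simp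
  calc (m : ℂ) * (p.coeff j * (r : ℂ) ^ j)
      = ∑ i ∈ Finset.range m, p.coeff i * ((r : ℂ) ^ i
          * (∑ k ∈ Finset.range m, (ζ ^ (i + (m - j))) ^ k)) := by
        rw [Finset.sum_congr rfl (fun i hi => by rw [hinner i hi])]
        rw [Finset.sum_eq_single j (fun b _ hb => by simp [hb]) (fun h => absurd (Finset.mem_range.2 hj) h)]
        rw [if_pos rfl]
        ring
    _ = ∑ k ∈ Finset.range m, p.eval ((r : ℂ) * ζ ^ k) * ζ ^ (k * (m - j)) := by
        simp_rw [hev, Finset.mul_sum]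
        rw [Finset.sum_comm]

lemma kpol_coeff_abs_le (n w j : ℕ) (hw2 : 2 * w ≤ n) (hj : j ≤ n) (r : ℝ) (hr : 0 < r) :
    |(kpol n w).coeff j| ≤ (1 + r ^ 2) ^ w * (1 + r) ^ (n - 2 * w) / r ^ j := by
  set F : Polynomial ℂ := Polynomial.map (algebraMap ℝ ℂ) (kpol n w) with hF
  have hFmul : F = (1 - Polynomial.X) ^ w * (1 + Polynomial.X) ^ (n - w) := by
    rw [hF, kpol]
    simp [Polynomial.map_mul, Polynomial.map_pow, Polynomial.map_sub, Polynomial.map_add,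
      Polynomial.map_one, Polynomial.map_X]
  have hdeg : F.natDegree < n + 1 := by
    rw [hFmul]
    have h1 : ((1 - Polynomial.X : Polynomial ℂ) ^ w).natDegree ≤ w := by
      apply le_trans (Polynomial.natDegree_pow_le)
      have : (1 - Polynomial.X : Polynomial ℂ) = -(Polynomial.X - Polynomial.C 1) := by rw [Polynomial.C_1]; ring
      rw [this, Polynomial.natDegree_neg, Polynomial.natDegree_X_sub_C]
      omega
    have h2 : ((1 + Polynomial.X : Polynomial ℂ) ^ (n - w)).natDegree ≤ n - w := by
      apply le_trans (Polynomial.natDegree_pow_le)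
      have : (1 + Polynomial.X : Polynomial ℂ) = Polynomial.X + Polynomial.C 1 := by rw [Polynomial.C_1]; ring
      rw [this, Polynomial.natDegree_X_add_C]
      omega
    have := Polynomial.natDegree_mul_le (p := (1 - Polynomial.X : Polynomial ℂ) ^ w)
      (q := (1 + Polynomial.X : Polynomial ℂ) ^ (n - w))
    omega
  have hid := dft_coeff (n + 1) (by omega) F hdeg j (by omega) r
  set ζ : ℂ := Complex.exp (2 * Real.pi * Complex.I / (n + 1 : ℕ)) with hζ
  have hζabs : ‖ζ‖ = 1 := by
    rw [hζ]
    have : (2 * (Real.pi : ℂ) * Complex.I / ((n + 1 : ℕ) : ℂ))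
        = ((2 * Real.pi / (n + 1 : ℕ) : ℝ) : ℂ) * Complex.I := by
      push_cast
      ring
    rw [this, Complex.norm_exp_ofReal_mul_I]
  -- uniform bound on evaluations
  have hev : ∀ k : ℕ, ‖F.eval ((r : ℂ) * ζ ^ k) * ζ ^ (k * (n + 1 - j))‖
      ≤ (1 + r ^ 2) ^ w * (1 + r) ^ (n - 2 * w) := by
    intro k
    set z : ℂ := (r : ℂ) * ζ ^ k with hz
    have hzabs : ‖z‖ = r := by
      rw [hz, norm_mul, norm_pow, hζabs, one_pow, mul_one, Complex.norm_real,
        Real.norm_eq_abs, abs_of_pos hr]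
    have hevF : F.eval z = (1 - z) ^ w * (1 + z) ^ (n - w) := by
      rw [hFmul]
      simp
    rw [norm_mul, norm_pow, hζabs, one_pow, mul_one, hevF]
    have hsplit : (1 - z) ^ w * (1 + z) ^ (n - w)
        = ((1 - z) * (1 + z)) ^ w * (1 + z) ^ (n - 2 * w) := by
      rw [mul_pow, mul_assoc, ← pow_add]
      congr 2
      omega
    rw [hsplit, norm_mul, norm_pow, norm_pow]
    have hb1 : ‖(1 - z) * (1 + z)‖ ≤ 1 + r ^ 2 := by
      have : (1 - z) * (1 + z) = 1 - z ^ 2 := by ring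
      rw [this]
      calc ‖1 - z ^ 2‖ ≤ ‖(1 : ℂ)‖ + ‖z ^ 2‖ := norm_sub_le _ _
        _ = 1 + r ^ 2 := by rw [norm_one, norm_pow, hzabs]
    have hb2 : ‖(1 + z : ℂ)‖ ≤ 1 + r := by
      calc ‖(1 + z : ℂ)‖ ≤ ‖(1 : ℂ)‖ + ‖z‖ := norm_add_le _ _
        _ = 1 + r := by rw [norm_one, hzabs]
    have h0 : (0 : ℝ) ≤ ‖(1 - z) * (1 + z)‖ := norm_nonneg _
    have h0' : (0 : ℝ) ≤ ‖(1 + z : ℂ)‖ := norm_nonneg _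
    apply mul_le_mul
    · exact pow_le_pow_left₀ h0 hb1 w
    · exact pow_le_pow_left₀ h0' hb2 _
    · positivity
    · positivity
  -- combine
  have hsum : ‖(((n + 1 : ℕ) : ℂ)) * (F.coeff j * (r : ℂ) ^ j)‖
      ≤ (n + 1 : ℕ) * ((1 + r ^ 2) ^ w * (1 + r) ^ (n - 2 * w)) := by
    rw [hid]
    calc ‖∑ k ∈ Finset.range (n + 1), F.eval ((r : ℂ) * ζ ^ k) * ζ ^ (k * (n + 1 - j))‖
        ≤ ∑ k ∈ Finset.range (n + 1), ‖F.eval ((r : ℂ) * ζ ^ k) * ζ ^ (k * (n + 1 - j))‖ :=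
          norm_sum_le _ _
      _ ≤ ∑ k ∈ Finset.range (n + 1), ((1 + r ^ 2) ^ w * (1 + r) ^ (n - 2 * w)) :=
          Finset.sum_le_sum (fun k _ => hev k)
      _ = (n + 1 : ℕ) * ((1 + r ^ 2) ^ w * (1 + r) ^ (n - 2 * w)) := by
          rw [Finset.sum_const, Finset.card_range, nsmul_eq_mul]
  have hcoeff : F.coeff j = (((kpol n w).coeff j : ℝ) : ℂ) := by
    rw [hF, Polynomial.coeff_map]
    rfl
  rw [hcoeff] at hsum
  have hlhs : ‖(((n + 1 : ℕ) : ℂ)) * ((((kpol n w).coeff j : ℝ) : ℂ) * (r : ℂ) ^ j)‖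
      = (n + 1 : ℕ) * (|(kpol n w).coeff j| * r ^ j) := by
    rw [norm_mul, norm_mul, norm_pow, Complex.norm_real, Complex.norm_natCast,
      Complex.norm_real, Real.norm_eq_abs, Real.norm_eq_abs, abs_of_pos hr]
  rw [hlhs] at hsum
  have hn1 : (0 : ℝ) < (n + 1 : ℕ) := by positivity
  have h2 : |(kpol n w).coeff j| * r ^ j ≤ (1 + r ^ 2) ^ w * (1 + r) ^ (n - 2 * w) :=
    le_of_mul_le_mul_left (by linarith [hsum]) hn1
  rw [le_div_iff₀ (by positivity)]
  exact h2

lemma main_bound (α : ℝ) (hα0 : 0 < α) (hα1 : α < 1 / 3) (n j w : ℕ)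
    (hjα : (j : ℝ) = α * n) (hj1 : 1 ≤ j) (hw2 : 2 * w ≤ n) :
    -(Real.exp 1 * (Real.exp 1 * (1 + Real.sqrt 2) * Real.sqrt ((1 - α) / α)) ^ j)
      ≤ (kpol n w).coeff j := by
  have h1α : 0 < 1 - α := by linarith
  have hβpos : 0 < α / (1 - α) := div_pos hα0 h1α
  have hβ'pos : 0 < (1 - α) / α := div_pos h1α hα0
  have hsq2 : (Real.sqrt 2) ^ 2 = 2 := Real.sq_sqrt (by norm_num)
  have hsq2nn : 0 ≤ Real.sqrt 2 := Real.sqrt_nonneg 2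
  have hsq2lt : Real.sqrt 2 < 1.5 := by nlinarith
  have hsq2gt : 1 < Real.sqrt 2 := by nlinarith
  set u : ℝ := Real.sqrt (α / (1 - α)) with hu
  have hupos : 0 < u := Real.sqrt_pos.2 hβpos
  have hu2 : u ^ 2 = α / (1 - α) := Real.sq_sqrt hβpos.le
  set r : ℝ := (Real.sqrt 2 - 1) * u with hrdef
  have hrpos : 0 < r := mul_pos (by linarith) hupos
  have hr2 : r ^ 2 = (3 - 2 * Real.sqrt 2) * (α / (1 - α)) := by
    rw [hrdef, mul_pow, hu2]
    linear_combination (α / (1 - α)) * hsq2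
  have hjn3 : 3 * (j : ℝ) < n := by
    have hn0 : 0 < n := by
      rcases Nat.eq_zero_or_pos n with h | h
      · exfalso; rw [h] at hjα; simp at hjα; omega
      · exact h
    have : (0 : ℝ) < n := by exact_mod_cast hn0
    nlinarith [hjα]
  have hjen : j ≤ n := by
    have : (j : ℝ) < n := by linarith [hjn3, Nat.cast_nonneg (α := ℝ) j]
    exact_mod_cast this.le
  by_cases hreg : (4 : ℝ) * j * ((n : ℝ) - j + 2) ≤ ((n : ℝ) - 2 * w) ^ 2
  · -- positivity region
    have := kpol_pos n w j hw2 hj1 hjn3 hreg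
    have hpos : 0 < Real.exp 1 * (Real.exp 1 * (1 + Real.sqrt 2) * Real.sqrt ((1 - α) / α)) ^ j := by
      apply mul_pos (Real.exp_pos 1)
      apply pow_pos
      apply mul_pos (mul_pos (Real.exp_pos 1) (by linarith))
      exact Real.sqrt_pos.2 hβ'pos
    linarith
  · push_neg at hreg
    have habs := kpol_coeff_abs_le n w j hw2 hjen r hrpos
    set s : ℝ := (n : ℝ) - 2 * w with hsdef
    have hs0 : 0 ≤ s := by
      have : ((2 * w : ℕ) : ℝ) ≤ ((n : ℕ) : ℝ) := by exact_mod_cast hw2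
      push_cast at this
      simp [hsdef]; linarith
    have hscast : ((n - 2 * w : ℕ) : ℝ) = s := by
      rw [Nat.cast_sub hw2]; push_cast; rfl
    -- key fact: (n - j) * β = j
    have hnjβ : ((n : ℝ) - j) * (α / (1 - α)) = j := by
      field_simp
      linear_combination -hjα
    have hβhalf : α / (1 - α) ≤ 1 / 2 := by
      rw [div_le_iff₀ h1α]; linarith
    have hjr0 : (0 : ℝ) ≤ (j : ℝ) := Nat.cast_nonneg j
    have hjr1 : (1 : ℝ) ≤ (j : ℝ) := by exact_mod_cast hj1
    have h32t : (0 : ℝ) ≤ 3 - 2 * Real.sqrt 2 := by linarith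
    -- bound on s * r
    have hsr : s * r ≤ (Real.sqrt 2 - 1) * (2 * (j : ℝ) + 1) := by
      have hb0 : (0 : ℝ) ≤ (Real.sqrt 2 - 1) * (2 * (j : ℝ) + 1) := by
        apply mul_nonneg (by linarith)
        linarith
      have e2 : s ^ 2 * r ^ 2 ≤ (4 * (j:ℝ) * ((n : ℝ) - j + 2)) * r ^ 2 :=
        mul_le_mul_of_nonneg_right hreg.le (sq_nonneg r)
      have e3 : (4 * (j:ℝ) * ((n : ℝ) - j + 2)) * r ^ 2
          = (3 - 2 * Real.sqrt 2) * (4 * (j:ℝ) ^ 2 + 8 * (j:ℝ) * (α / (1 - α))) := by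
        rw [hr2]
        linear_combination ((3 - 2 * Real.sqrt 2) * 4 * (j : ℝ)) * hnjβ
      have e4 : 8 * (j:ℝ) * (α / (1 - α)) ≤ 4 * (j:ℝ) := by
        have := mul_le_mul_of_nonneg_left hβhalf (by linarith : (0:ℝ) ≤ 8 * (j:ℝ))
        linarith
      have hsq : (s * r) ^ 2 ≤ ((Real.sqrt 2 - 1) * (2 * (j : ℝ) + 1)) ^ 2 := by
        have e5 : ((Real.sqrt 2 - 1) * (2 * (j : ℝ) + 1)) ^ 2
            = (3 - 2 * Real.sqrt 2) * (2 * (j:ℝ) + 1) ^ 2 := by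
          linear_combination ((2 * (j:ℝ) + 1) ^ 2) * hsq2
        have step1 : (s * r) ^ 2 = s ^ 2 * r ^ 2 := by ring
        have step2 : (3 - 2 * Real.sqrt 2) * (4 * (j:ℝ) ^ 2 + 8 * (j:ℝ) * (α / (1 - α)))
            ≤ (3 - 2 * Real.sqrt 2) * (4 * (j:ℝ) ^ 2 + 4 * (j:ℝ)) :=
          mul_le_mul_of_nonneg_left (by linarith) h32t
        have step3 : (3 - 2 * Real.sqrt 2) * (4 * (j:ℝ) ^ 2 + 4 * (j:ℝ))
            ≤ (3 - 2 * Real.sqrt 2) * (2 * (j:ℝ) + 1) ^ 2 :=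
          mul_le_mul_of_nonneg_left (by nlinarith) h32t
        rw [e5, step1]
        linarith
      have := Real.sqrt_le_sqrt hsq
      rwa [Real.sqrt_sq (mul_nonneg hs0 hrpos.le), Real.sqrt_sq hb0] at this
    -- bound on w * r^2
    have hwr : (w : ℝ) * r ^ 2 ≤ (9 - 6 * Real.sqrt 2) / 4 * (j : ℝ) := by
      have hwn : (w : ℝ) ≤ (n : ℝ) / 2 := by
        have : ((2 * w : ℕ) : ℝ) ≤ ((n : ℕ) : ℝ) := by exact_mod_cast hw2
        push_cast at this
        linarith
      have hnβ : (n : ℝ) * (α / (1 - α)) ≤ 3 / 2 * (j : ℝ) := by nlinarith [hnjβ]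
      have h1 : (w : ℝ) * r ^ 2 ≤ (n : ℝ) / 2 * r ^ 2 :=
        mul_le_mul_of_nonneg_right hwn (sq_nonneg r)
      have h2 : (n : ℝ) / 2 * r ^ 2 = (3 - 2 * Real.sqrt 2) / 2 * ((n : ℝ) * (α / (1 - α))) := by
        rw [hr2]; ring
      have h3 : (3 - 2 * Real.sqrt 2) / 2 * ((n : ℝ) * (α / (1 - α)))
          ≤ (3 - 2 * Real.sqrt 2) / 2 * (3 / 2 * (j : ℝ)) :=
        mul_le_mul_of_nonneg_left hnβ (by linarith)
      linarith
    have hexp : (w : ℝ) * r ^ 2 + s * r ≤ (j : ℝ) + 1 := by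
      nlinarith [mul_nonneg hjr0 h32t]
    -- exponential bounds
    have hA : (1 + r ^ 2) ^ w ≤ Real.exp ((w : ℝ) * r ^ 2) := by
      calc (1 + r ^ 2) ^ w ≤ (Real.exp (r ^ 2)) ^ w := by
            apply pow_le_pow_left₀ (by positivity)
            linarith [Real.add_one_le_exp (r ^ 2)]
        _ = Real.exp ((w : ℝ) * r ^ 2) := by rw [← Real.exp_nat_mul]
    have hB : (1 + r) ^ (n - 2 * w) ≤ Real.exp (s * r) := by
      calc (1 + r) ^ (n - 2 * w) ≤ (Real.exp r) ^ (n - 2 * w) := by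
            apply pow_le_pow_left₀ (by positivity)
            linarith [Real.add_one_le_exp r]
        _ = Real.exp (((n - 2 * w : ℕ) : ℝ) * r) := by rw [← Real.exp_nat_mul]
        _ = Real.exp (s * r) := by rw [hscast]
    have hAB : (1 + r ^ 2) ^ w * (1 + r) ^ (n - 2 * w) ≤ Real.exp ((j : ℝ) + 1) := by
      calc (1 + r ^ 2) ^ w * (1 + r) ^ (n - 2 * w)
          ≤ Real.exp ((w : ℝ) * r ^ 2) * Real.exp (s * r) := by
            apply mul_le_mul hA hB (by positivity) (Real.exp_nonneg _)
        _ = Real.exp ((w : ℝ) * r ^ 2 + s * r) := by rw [← Real.exp_add]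
        _ ≤ Real.exp ((j : ℝ) + 1) := Real.exp_le_exp.2 hexp
    have habs2 : |(kpol n w).coeff j| ≤ Real.exp ((j : ℝ) + 1) / r ^ j := by
      apply le_trans habs
      gcongr
    -- identity for the RHS
    have hq : u * Real.sqrt ((1 - α) / α) = 1 := by
      rw [hu, ← Real.sqrt_mul hβpos.le]
      rw [show α / (1 - α) * ((1 - α) / α) = 1 by field_simp]
      exact Real.sqrt_one
    have hprod : r * ((1 + Real.sqrt 2) * Real.sqrt ((1 - α) / α)) = 1 := by
      rw [hrdef]
      linear_combination hq + Real.sqrt ((1 - α) / α) * u * hsq2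
    have hprod' : (1 + Real.sqrt 2) * Real.sqrt ((1 - α) / α) * r = 1 := by
      rw [mul_comm]; exact hprod
    have h1r : (1 + Real.sqrt 2) * Real.sqrt ((1 - α) / α) = 1 / r :=
      eq_one_div_of_mul_eq_one_left hprod'
    have hfinal : Real.exp ((j : ℝ) + 1) / r ^ j
        = Real.exp 1 * (Real.exp 1 * (1 + Real.sqrt 2) * Real.sqrt ((1 - α) / α)) ^ j := by
      have he : Real.exp ((j : ℝ)) = (Real.exp 1) ^ j := by
        rw [← Real.exp_nat_mul, mul_one]
      rw [Real.exp_add, he, mul_assoc (Real.exp 1) (1 + Real.sqrt 2), h1r, mul_pow]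
      rw [mul_pow (Real.exp 1) (1 / r), hrdef]
      have hne1 : Real.sqrt 2 - 1 ≠ 0 := ne_of_gt (by linarith)
      have hne2 : u ≠ 0 := ne_of_gt hupos
      field_simp
      rw [one_div_pow, mul_pow, mul_one_div, div_self (mul_ne_zero (pow_ne_zero _ hne1) (pow_ne_zero _ hne2))]
    rw [← hfinal]
    have := neg_abs_le ((kpol n w).coeff j)
    linarith [habs2]

/-- for `0 < α < 1/3` and `j = αn` an even positive integer,
`K_j(w) ≥ -C (e(1+√2)√((1-α)/α))^{αn}` for all `0 ≤ w ≤ n` and `n` large. -/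
theorem kraw_lower_bound_linear_j (α : ℝ) (hα0 : 0 < α) (hα1 : α < 1 / 3) :
    ∃ C : ℝ, 0 < C ∧ ∃ N : ℕ, ∀ n : ℕ, N ≤ n → ∀ j : ℕ,
      (j : ℝ) = α * (n : ℝ) → Even j → 0 < j → ∀ w : ℕ, w ≤ n →
      krawF n j (w : ℝ) ≥
        -C * (Real.exp 1 * (1 + Real.sqrt 2) * Real.sqrt ((1 - α) / α))
          ^ (α * (n : ℝ)) := by
  refine ⟨Real.exp 1, Real.exp_pos 1, 0, ?_⟩
  intro n _ j hjα hje hjpos w hwn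
  have hj1 : 1 ≤ j := hjpos
  have hrhs : -(Real.exp 1) * (Real.exp 1 * (1 + Real.sqrt 2) * Real.sqrt ((1 - α) / α))
        ^ (α * (n : ℝ))
      = -(Real.exp 1 * (Real.exp 1 * (1 + Real.sqrt 2) * Real.sqrt ((1 - α) / α)) ^ j) := by
    rw [← hjα, Real.rpow_natCast]
    ring
  rw [ge_iff_le, hrhs]
  rcases le_or_gt (2 * w) n with h2w | h2w
  · rw [krawF_eq_coeff n j w hwn]
    exact main_bound α hα0 hα1 n j w hjα hj1 h2w
  · have hw2' : 2 * (n - w) ≤ n := by omega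
    have hsymm : (kpol n w).coeff j = (kpol n (n - w)).coeff j := by
      have := kpol_symm n (n - w) j (by omega) hje
      rw [show n - (n - w) = w by omega] at this
      exact this
    rw [krawF_eq_coeff n j w hwn, hsymm]
    exact main_bound α hα0 hα1 n j (n - w) hjα hj1 hw2'
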